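/- Let R be a *-ring and let a ∈ R be both group invertible and Moore–Penrose invertible. Then a is an SEP element if and only if a⁺aa# · a(a#)*a⁺ = a⁺aa# · a⁺a² (i.e. a(a#)*a⁺ and a⁺a² are left (a⁺aa#)-equivalent). -/
import Mathlib


theorem stmt_18 (R : Type*) [Ring R] [StarRing R] (a ap ag : R)
    (h1 : a * ap * a = a) (h2 : ap * a * ap = ap)
    (h3 : star (a * ap) = a * ap) (h4 : star (ap * a) = ap * a)
    (g1 : a * ag * a = a) (g2 : ag * a * ag = ag) (g3 : a * ag = ag * a) :
    (star a = ap ∧ ap = ag) ↔ (ap * a * ag) * (a * star ag * ap) = (ap * a * ag) * (ap * a * a) := by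
  constructor
  · rintro ⟨hs, he⟩
    subst he
    subst hs
    have comm : a * star a = star a * a := g3
    have key : a * a * star a = star a * a * a := by
      rw [mul_assoc, comm, ← mul_assoc, comm]
    calc (star a * a * star a) * (a * star (star a) * star a)
        = star a * (a * a * star a) := by rw [star_star, h2]
      _ = star a * (star a * a * a) := by rw [key]
      _ = (star a * a * star a) * (star a * a * a) := by rw [h2]
  · intro H
    have agaa : ag * a * a = a := by rw [← g3, g1]
    -- simplify RHS
    have hR : ap * a * ag * (ap * a * a) = ap * a := by
      calc ap * a * ag * (ap * a * a)
          = ap * (a * ag) * (ap * a * a) := by noncomm_ring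
        _ = ap * (ag * a) * (ap * a * a) := by rw [g3]
        _ = ap * ag * (a * ap * a) * a := by noncomm_ring
        _ = ap * ag * a * a := by rw [h1]
        _ = ap * (a * ag) * a := by rw [g3]; noncomm_ring
        _ = ap * (a * ag * a) := by noncomm_ring
        _ = ap * a := by rw [g1]
    -- simplify LHS
    have hL : ap * a * ag * (a * star ag * ap) = ap * a * star ag * ap := by
      calc ap * a * ag * (a * star ag * ap)
          = ap * (a * ag * a) * (star ag * ap) := by noncomm_ring
        _ = ap * a * (star ag * ap) := by rw [g1]
        _ = ap * a * star ag * ap := by noncomm_ring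
    have C0 : ap * a * star ag * ap = ap * a := hL.symm.trans (H.trans hR)
    have C : a * star ag * ap = a := by
      calc a * star ag * ap
          = (a * ap * a) * star ag * ap := by rw [h1]
        _ = a * (ap * a * star ag * ap) := by noncomm_ring
        _ = a * (ap * a) := by rw [C0]
        _ = a * ap * a := by noncomm_ring
        _ = a := h1
    have st1 : a * a * ap = a := by
      calc a * a * ap
          = (a * star ag * ap) * a * ap := by rw [C]
        _ = a * star ag * (ap * a * ap) := by noncomm_ring
        _ = a * star ag * ap := by rw [h2]
        _ = a := C
    have D : ag * a = a * ap := by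
      calc ag * a
          = ag * (a * a * ap) := by rw [st1]
        _ = ag * a * a * ap := by noncomm_ring
        _ = a * ap := by rw [agaa]
    have aag : a * ag = a * ap := by rw [g3, D]
    have P : ap * a * ag = ap := by
      calc ap * a * ag
          = ap * (a * ag) := by noncomm_ring
        _ = ap * (a * ap) := by rw [aag]
        _ = ap * a * ap := by noncomm_ring
        _ = ap := h2
    have C2 : a * star ag * ap * a = a * a := by rw [C]
    have E : ap * star a = star a * star a := by
      have := congrArg star C2
      simp only [star_mul, star_star] at this
      -- this : star a * (star ap * (ag * star a)) = star a * star a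
      calc ap * star a
          = ap * a * ag * star a := by rw [P]
        _ = (star a * star ap) * (ag * star a) := by rw [← h4, star_mul]; noncomm_ring
        _ = star a * (star ap * (ag * star a)) := by noncomm_ring
        _ = star a * star a := this
    have E' : a * star ap = a * a := by
      have := congrArg star E
      simp only [star_mul, star_star] at this
      exact this
    have H1 : a * ap * star ap = a := by
      calc a * ap * star ap
          = ag * a * star ap := by rw [D]
        _ = ag * (a * star ap) := by noncomm_ring
        _ = ag * (a * a) := by rw [E']
        _ = ag * a * a := by noncomm_ring
        _ = a := agaa
    have H1' : ap * star ap * star a = star a := by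
      have := congrArg star H1
      simp only [star_mul, star_star] at this
      calc ap * star ap * star a
          = ap * (star ap * star a) := by noncomm_ring
        _ = star a := this
    have hap : ap = star a := by
      calc ap
          = ap * a * ap := h2.symm
        _ = ap * (a * ap) := by noncomm_ring
        _ = ap * star (a * ap) := by rw [h3]
        _ = ap * (star ap * star a) := by rw [star_mul]
        _ = ap * star ap * star a := by noncomm_ring
        _ = star a := H1'
    have K : a * star a * star a = star a := by
      have := congrArg star st1
      simp only [star_mul, star_star, hap] at this
      calc a * star a * star a
          = a * (star a * star a) := by noncomm_ring
        _ = star a := this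
    have hag : ag = ap := by
      calc ag
          = ag * a * ag := g2.symm
        _ = ag * (a * ag) := by noncomm_ring
        _ = ag * (a * ap) := by rw [aag]
        _ = ag * a * ap := by noncomm_ring
        _ = a * ap * ap := by rw [D]
        _ = a * star a * star a := by rw [hap]
        _ = star a := K
        _ = ap := hap.symm
    exact ⟨hap.symm, hag.symm⟩
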